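/- Stability of re-orthonormalized bases (deterministic matrix lemma used in the proof of Lemma A.3(b)). Let U be a T×a real matrix and V a T×b real matrix with spectral norms ‖U‖₂ ≤ 1 and ‖V‖₂ ≤ 1, and let P be any b×a real matrix. Then ‖(U + VP)(I_a + P'P)^{-1/2} − U‖₂ ≤ 2‖P‖₂. In particular, if U and V have orthonormal columns, the re-orthonormalized perturbed basis (U + VP)(I_a + P'P)^{-1/2} differs from U in spectral norm by at most 2‖P‖₂. -/

import Mathlib

open Matrix
open scoped Matrix.Norms.L2Operator

noncomputable section

/-- Spectral norm of a real matrix: the operator norm of the induced linear map between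
Euclidean spaces. -/
def specNorm {m p : Type*} [Fintype m] [Fintype p] [DecidableEq p] (A : Matrix m p ℝ) : ℝ :=
  ‖LinearMap.toContinuousLinearMap (Matrix.toEuclideanLin A)‖

/-- `(I + PᴴP)^{-1/2}`: the inverse of the positive-semidefinite square root of
`I + PᴴP` (over `ℝ`, `Pᴴ = P'`). -/
def invSqrtOnePlus {a b : Type*} [Fintype a] [Fintype b] [DecidableEq a]
    (P : Matrix b a ℝ) : Matrix a a ℝ :=
  (let hA := (Matrix.PosSemidef.add Matrix.PosSemidef.one
      (Matrix.posSemidef_conjTranspose_mul_self P));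
    hA.1.eigenvectorUnitary.1 * diagonal ((↑) ∘ Real.sqrt ∘ hA.1.eigenvalues) *
      (star hA.1.eigenvectorUnitary : Matrix a a ℝ))⁻¹

lemma specNorm_eq_l2norm {m p : Type*} [Fintype m] [Fintype p] [DecidableEq p]
    (A : Matrix m p ℝ) : specNorm A = ‖A‖ := rfl

lemma l2norm_one_le (n : Type*) [Fintype n] [DecidableEq n] : ‖(1 : Matrix n n ℝ)‖ ≤ 1 := by
  rw [Matrix.cstar_norm_def, _root_.map_one]
  exact ContinuousLinearMap.norm_id_le

lemma l2norm_unitary_le {n : Type*} [Fintype n] [DecidableEq n] {W : Matrix n n ℝ}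
    (hW : W ∈ Matrix.unitaryGroup n ℝ) : ‖W‖ ≤ 1 := by
  have h := Matrix.l2_opNorm_conjTranspose_mul_self W
  rw [show Wᴴ * W = 1 from (Matrix.mem_unitaryGroup_iff').mp hW] at h
  nlinarith [l2norm_one_le n, norm_nonneg W]

lemma l2_opNorm_diagonal_le {n : Type*} [Fintype n] [DecidableEq n] (d : n → ℝ) (c : ℝ)
    (hc : 0 ≤ c) (h : ∀ i, |d i| ≤ c) : ‖(Matrix.diagonal d : Matrix n n ℝ)‖ ≤ c := by
  rw [Matrix.l2_opNorm_def]
  apply ContinuousLinearMap.opNorm_le_bound _ hc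
  intro x
  simp only [LinearEquiv.trans_apply]
  rw [show ((Matrix.toEuclideanLin (Matrix.diagonal d)).toContinuousLinearMap x : EuclideanSpace ℝ n)
      = (Matrix.toEuclideanLin (Matrix.diagonal d)) x from rfl]
  rw [Matrix.toEuclideanLin_apply]
  rw [EuclideanSpace.norm_eq, EuclideanSpace.norm_eq]
  rw [← Real.sqrt_sq hc, ← Real.sqrt_mul (by positivity)]
  apply Real.sqrt_le_sqrt
  rw [Finset.mul_sum]
  apply Finset.sum_le_sum
  intro i _
  have hdi : (WithLp.toLp 2 (Matrix.diagonal d *ᵥ x.ofLp)).ofLp i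
      = d i * x i := by
    simp [Matrix.mulVec_diagonal]
  rw [hdi]
  have h1 : |d i * x i| ≤ c * |x i| := by
    rw [abs_mul]
    exact mul_le_mul_of_nonneg_right (h i) (abs_nonneg _)
  calc ‖d i * x i‖ ^ 2 = |d i * x i| ^ 2 := by rw [Real.norm_eq_abs]
    _ ≤ (c * |x i|) ^ 2 := by apply pow_le_pow_left₀ (abs_nonneg _) h1
    _ = c ^ 2 * ‖x i‖ ^ 2 := by rw [mul_pow, Real.norm_eq_abs]

/-- A conjugation bound: `‖W * D * star W‖ ≤ ‖D‖` for unitary `W`. -/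
lemma l2norm_conj_le {n : Type*} [Fintype n] [DecidableEq n] {W : Matrix n n ℝ}
    (hW : W ∈ Matrix.unitaryGroup n ℝ) (D : Matrix n n ℝ) : ‖W * D * star W‖ ≤ ‖D‖ := by
  have h1 : ‖W * D * star W‖ ≤ ‖W * D‖ * ‖star W‖ := Matrix.l2_opNorm_mul _ _
  have h2 : ‖W * D‖ ≤ ‖W‖ * ‖D‖ := Matrix.l2_opNorm_mul _ _
  have hWle : ‖W‖ ≤ 1 := l2norm_unitary_le hW
  have hsWle : ‖star W‖ ≤ 1 := by
    rw [Matrix.star_eq_conjTranspose, Matrix.l2_opNorm_conjTranspose]; exact hWle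
  calc ‖W * D * star W‖ ≤ ‖W * D‖ * ‖star W‖ := h1
    _ ≤ ‖W * D‖ * 1 := mul_le_mul_of_nonneg_left hsWle (norm_nonneg _)
    _ = ‖W * D‖ := mul_one _
    _ ≤ ‖W‖ * ‖D‖ := h2
    _ ≤ 1 * ‖D‖ := mul_le_mul_of_nonneg_right hWle (norm_nonneg _)
    _ = ‖D‖ := one_mul _

lemma eig_abs_le {n : Type*} [Fintype n] [DecidableEq n] {A : Matrix n n ℝ}
    (hH : A.IsHermitian) (i : n) : |hH.eigenvalues i| ≤ ‖A‖ := by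
  have hv : ‖hH.eigenvectorBasis i‖ = 1 := hH.eigenvectorBasis.orthonormal.1 i
  have hmul := hH.mulVec_eigenvectorBasis i
  have hle := A.l2_opNorm_mulVec (hH.eigenvectorBasis i)
  have key : ((EuclideanSpace.equiv n ℝ).symm (A *ᵥ ⇑(hH.eigenvectorBasis i)) : EuclideanSpace ℝ n)
      = hH.eigenvalues i • hH.eigenvectorBasis i := by
    ext j
    have := congrFun hmul j
    simpa using this
  replace hle : ‖hH.eigenvalues i • hH.eigenvectorBasis i‖ ≤ ‖A‖ * ‖hH.eigenvectorBasis i‖ := by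
    rw [← key]; exact hle
  rw [norm_smul, hv, Real.norm_eq_abs, mul_one, mul_one] at hle
  exact hle

lemma eig_ge_one {a b : Type*} [Fintype a] [Fintype b] [DecidableEq a]
    (P : Matrix b a ℝ) (hH : (1 + Pᴴ * P).IsHermitian) (i : a) : 1 ≤ hH.eigenvalues i := by
  set v := hH.eigenvectorBasis i with hv
  have hnv : ‖v‖ = 1 := hH.eigenvectorBasis.orthonormal.1 i
  have hmul := hH.mulVec_eigenvectorBasis i
  have hM := Matrix.posSemidef_conjTranspose_mul_self P
  have hpos := hM.dotProduct_mulVec_nonneg ⇑v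
  have hMv : (Pᴴ * P) *ᵥ ⇑v = (hH.eigenvalues i - 1) • ⇑v := by
    have hsplit : (1 + Pᴴ * P) *ᵥ ⇑v = ⇑v + (Pᴴ * P) *ᵥ ⇑v := by
      rw [Matrix.add_mulVec, Matrix.one_mulVec]
    rw [hsplit] at hmul
    have := congrArg (· - ⇑v) hmul
    simp only [add_sub_cancel_left] at this
    rw [this, sub_smul, one_smul]
  rw [hMv] at hpos
  have hdot : dotProduct (star ⇑v) ((hH.eigenvalues i - 1) • ⇑v)
      = (hH.eigenvalues i - 1) * dotProduct (star ⇑v) ⇑v := by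
    rw [dotProduct_smul]; rfl
  rw [hdot] at hpos
  have hvv : dotProduct (star ⇑v) ⇑v = 1 := by
    have hinner : dotProduct (star ⇑v) ⇑v = (inner ℝ v v : ℝ) := by
      rw [EuclideanSpace.inner_eq_star_dotProduct, dotProduct_comm]
    rw [hinner, real_inner_self_eq_norm_sq, hnv]; norm_num
  rw [hvv, mul_one] at hpos
  linarith

/-- scalar inequality: if `1 ≤ t ≤ 1 + p²` with `p ≥ 0`, then `|1 - 1/√t| ≤ p`. -/
lemma scalar_bound {t p : ℝ} (h1 : 1 ≤ t) (h2 : t ≤ 1 + p ^ 2) (hp : 0 ≤ p) :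
    |1 - (Real.sqrt t)⁻¹| ≤ p := by
  set s := Real.sqrt t with hs
  have hs1 : 1 ≤ s := by
    rw [hs]; exact Real.one_le_sqrt.mpr h1
  have hs2 : s ^ 2 = t := Real.sq_sqrt (by linarith)
  have hspos : 0 < s := by linarith
  have hinv : s * s⁻¹ = 1 := mul_inv_cancel₀ (ne_of_gt hspos)
  have hinvle : s⁻¹ ≤ 1 := by
    rw [inv_le_one_iff₀]; right; exact hs1
  have hinvpos : 0 < s⁻¹ := inv_pos.mpr hspos
  rw [abs_of_nonneg (by linarith)]
  rcases le_or_gt 1 p with hp1 | hp1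
  · linarith
  · -- p < 1 : use 1 - 1/s ≤ s - 1 ≤ (s²-1)/2 ≤ p²/2 ≤ p² ≤ p
    nlinarith [sq_nonneg (s - 1), mul_pos hspos hinvpos, sq_nonneg (s*p - 1)]

lemma invSqrtOnePlus_eq {a b : Type*} [Fintype a] [Fintype b] [DecidableEq a]
    (P : Matrix b a ℝ) :
    invSqrtOnePlus P =
      (Matrix.PosSemidef.add Matrix.PosSemidef.one
        (Matrix.posSemidef_conjTranspose_mul_self P)).1.eigenvectorUnitary.1 *
      Matrix.diagonal (fun i => (Real.sqrt ((Matrix.PosSemidef.add Matrix.PosSemidef.one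
        (Matrix.posSemidef_conjTranspose_mul_self P)).1.eigenvalues i))⁻¹) *
      star ((Matrix.PosSemidef.add Matrix.PosSemidef.one
        (Matrix.posSemidef_conjTranspose_mul_self P)).1.eigenvectorUnitary.1) := by
  set hA := Matrix.PosSemidef.add (Matrix.PosSemidef.one (n := a) (R := ℝ))
      (Matrix.posSemidef_conjTranspose_mul_self P) with hAdef
  set hH := hA.1
  set W := (hH.eigenvectorUnitary : Matrix a a ℝ) with hW
  set ν := hH.eigenvalues with hν
  have hsqrt : invSqrtOnePlus P = (W * Matrix.diagonal (fun i => Real.sqrt (ν i)) * star W)⁻¹ := rfl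
  rw [hsqrt]
  apply Matrix.inv_eq_right_inv
  have hWW : W * star W = 1 := (Matrix.mem_unitaryGroup_iff).mp hH.eigenvectorUnitary.2
  have hsWW : star W * W = 1 := (Matrix.mem_unitaryGroup_iff').mp hH.eigenvectorUnitary.2
  calc W * Matrix.diagonal (fun i => Real.sqrt (ν i)) * star W *
        (W * Matrix.diagonal (fun i => (Real.sqrt (ν i))⁻¹) * star W)
      = W * (Matrix.diagonal (fun i => Real.sqrt (ν i)) * (star W * W) *
          Matrix.diagonal (fun i => (Real.sqrt (ν i))⁻¹)) * star W := by
        simp only [Matrix.mul_assoc]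
    _ = W * (Matrix.diagonal (fun i => Real.sqrt (ν i)) *
          Matrix.diagonal (fun i => (Real.sqrt (ν i))⁻¹)) * star W := by rw [hsWW, Matrix.mul_one]
    _ = W * star W := by
        rw [Matrix.diagonal_mul_diagonal]
        have hfun : (fun i => Real.sqrt (ν i) * (Real.sqrt (ν i))⁻¹) = fun _ => (1:ℝ) := by
          funext i
          have h1 : (1:ℝ) ≤ ν i := eig_ge_one P hH i
          have hne : Real.sqrt (ν i) ≠ 0 := by positivity
          field_simp
        rw [hfun, Matrix.diagonal_one, Matrix.mul_one]
    _ = 1 := hWW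

/-- **Stability of re-orthonormalized bases.**  If `U` is `T × a` and `V` is `T × b` with
`‖U‖₂ ≤ 1` and `‖V‖₂ ≤ 1`, then for any `b × a` matrix `P`,
`‖(U + VP)(I + P'P)^{-1/2} - U‖₂ ≤ 2‖P‖₂`. -/
theorem reorthonormalized_basis_stability {T a b : ℕ}
    (U : Matrix (Fin T) (Fin a) ℝ) (V : Matrix (Fin T) (Fin b) ℝ)
    (P : Matrix (Fin b) (Fin a) ℝ)
    (hU : specNorm U ≤ 1) (hV : specNorm V ≤ 1) :
    specNorm ((U + V * P) * invSqrtOnePlus P - U) ≤ 2 * specNorm P := by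
  simp only [specNorm_eq_l2norm] at *
  set hA := Matrix.PosSemidef.add (Matrix.PosSemidef.one (n := Fin a) (R := ℝ))
      (Matrix.posSemidef_conjTranspose_mul_self P) with hAdef
  set hH := hA.1
  set W := (hH.eigenvectorUnitary : Matrix (Fin a) (Fin a) ℝ) with hW
  set ν := hH.eigenvalues with hν
  have hWmem : W ∈ Matrix.unitaryGroup (Fin a) ℝ := hH.eigenvectorUnitary.2
  have hWW : W * star W = 1 := (Matrix.mem_unitaryGroup_iff).mp hWmem
  set Q := invSqrtOnePlus P with hQdef
  have hQ : Q = W * Matrix.diagonal (fun i => (Real.sqrt (ν i))⁻¹) * star W :=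
    invSqrtOnePlus_eq P
  have hp : (0:ℝ) ≤ ‖P‖ := norm_nonneg _
  -- eigenvalue bounds
  have hν1 : ∀ i, 1 ≤ ν i := eig_ge_one P hH
  have hν2 : ∀ i, ν i ≤ 1 + ‖P‖ ^ 2 := by
    intro i
    have h1 : |ν i| ≤ ‖(1 + Pᴴ * P : Matrix (Fin a) (Fin a) ℝ)‖ := eig_abs_le hH i
    have h2 : ‖(1 + Pᴴ * P : Matrix (Fin a) (Fin a) ℝ)‖ ≤ ‖(1 : Matrix (Fin a) (Fin a) ℝ)‖ + ‖Pᴴ * P‖ :=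
      norm_add_le _ _
    have h3 : ‖Pᴴ * P‖ = ‖P‖ * ‖P‖ := Matrix.l2_opNorm_conjTranspose_mul_self P
    have h4 := l2norm_one_le (Fin a)
    have := abs_le.mp h1
    nlinarith [this.2]
  -- norm of Q is at most 1
  have hQle : ‖Q‖ ≤ 1 := by
    rw [hQ]
    refine le_trans (l2norm_conj_le hWmem _) ?_
    apply l2_opNorm_diagonal_le _ _ zero_le_one
    intro i
    have h1 := hν1 i
    have hs1 : 1 ≤ Real.sqrt (ν i) := Real.one_le_sqrt.mpr h1
    rw [abs_of_nonneg (by positivity)]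
    rw [inv_le_one_iff₀]; right; exact hs1
  -- norm of 1 - Q is at most ‖P‖
  have h1Q : (1 : Matrix (Fin a) (Fin a) ℝ) - Q =
      W * Matrix.diagonal (fun i => 1 - (Real.sqrt (ν i))⁻¹) * star W := by
    have hone : (1 : Matrix (Fin a) (Fin a) ℝ) =
        W * Matrix.diagonal (fun _ => (1:ℝ)) * star W := by
      rw [Matrix.diagonal_one, Matrix.mul_one, hWW]
    rw [hQ]
    conv_lhs => rw [hone]
    rw [← Matrix.sub_mul, ← Matrix.mul_sub, Matrix.diagonal_sub]
  have h1Qle : ‖(1 : Matrix (Fin a) (Fin a) ℝ) - Q‖ ≤ ‖P‖ := by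
    rw [h1Q]
    refine le_trans (l2norm_conj_le hWmem _) ?_
    apply l2_opNorm_diagonal_le _ _ hp
    intro i
    exact scalar_bound (hν1 i) (hν2 i) hp
  -- decompose
  have hdecomp : (U + V * P) * Q - U = U * (Q - 1) + V * (P * Q) := by
    rw [Matrix.add_mul, Matrix.mul_sub, Matrix.mul_one, Matrix.mul_assoc]
    abel
  rw [hdecomp]
  have hb1 : ‖U * (Q - 1)‖ ≤ ‖P‖ := by
    refine le_trans (Matrix.l2_opNorm_mul _ _) ?_
    have : ‖Q - 1‖ ≤ ‖P‖ := by
      rw [show Q - 1 = -(1 - Q) by abel, norm_neg]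
      exact h1Qle
    calc ‖U‖ * ‖Q - 1‖ ≤ 1 * ‖Q - 1‖ := mul_le_mul_of_nonneg_right hU (norm_nonneg _)
      _ = ‖Q - 1‖ := one_mul _
      _ ≤ ‖P‖ := this
  have hb2 : ‖V * (P * Q)‖ ≤ ‖P‖ := by
    refine le_trans (Matrix.l2_opNorm_mul _ _) ?_
    have hPQ : ‖P * Q‖ ≤ ‖P‖ := by
      refine le_trans (Matrix.l2_opNorm_mul _ _) ?_
      calc ‖P‖ * ‖Q‖ ≤ ‖P‖ * 1 := mul_le_mul_of_nonneg_left hQle hp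
        _ = ‖P‖ := mul_one _
    calc ‖V‖ * ‖P * Q‖ ≤ 1 * ‖P * Q‖ := mul_le_mul_of_nonneg_right hV (norm_nonneg _)
      _ = ‖P * Q‖ := one_mul _
      _ ≤ ‖P‖ := hPQ
  calc ‖U * (Q - 1) + V * (P * Q)‖ ≤ ‖U * (Q - 1)‖ + ‖V * (P * Q)‖ := norm_add_le _ _
    _ ≤ ‖P‖ + ‖P‖ := add_le_add hb1 hb2
    _ = 2 * ‖P‖ := by ring
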